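/- There exists a constant C > 0 with the following property: for every Δx > 0, every M ≥ 0 and every function U : ℝ → ℝ that is five times continuously differentiable on the interval [−3Δx, 2Δx] with |U⁽⁵⁾(x)| ≤ M for all x ∈ [−3Δx, 2Δx], setting Ā_j = (1/Δx)·∫_{(j−1)Δx}^{jΔx} U(x) dx for j ∈ {−2, −1, 0, 1, 2}, one has |(1/30)·Ā_{−2} − (13/60)·Ā_{−1} + (47/60)·Ā_0 + (9/20)·Ā_1 − (1/20)·Ā_2 − U(0)| ≤ C·M·Δx⁵. -/

import Mathlib

set_option maxHeartbeats 2000000 in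
/-- Fifth-order accuracy of the cell-average-to-nodal-value reconstruction formula. -/
theorem stmt_18 :
    ∃ C : ℝ, 0 < C ∧ ∀ Δx : ℝ, 0 < Δx → ∀ M : ℝ, 0 ≤ M → ∀ U : ℝ → ℝ,
      ContDiffOn ℝ 5 U (Set.Icc (-(3 * Δx)) (2 * Δx)) →
      (∀ x ∈ Set.Icc (-(3 * Δx)) (2 * Δx),
        |iteratedDerivWithin 5 U (Set.Icc (-(3 * Δx)) (2 * Δx)) x| ≤ M) →
      |(1 / 30) * ((1 / Δx) * ∫ x in (-3 * Δx)..(-2 * Δx), U x)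
        - (13 / 60) * ((1 / Δx) * ∫ x in (-2 * Δx)..(-1 * Δx), U x)
        + (47 / 60) * ((1 / Δx) * ∫ x in (-1 * Δx)..(0 * Δx), U x)
        + (9 / 20) * ((1 / Δx) * ∫ x in (0 * Δx)..(1 * Δx), U x)
        - (1 / 20) * ((1 / Δx) * ∫ x in (1 * Δx)..(2 * Δx), U x)
        - U 0| ≤ C * M * Δx ^ 5 := by
  refine ⟨1000, by norm_num, ?_⟩
  intro Δx hΔx M hM U hU hbound
  have hΔx' : Δx ≠ 0 := ne_of_gt hΔx
  set s : Set ℝ := Set.Icc (-(3 * Δx)) (2 * Δx) with hs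
  have hab : -(3 * Δx) ≤ 2 * Δx := by linarith
  have hU' : ContDiffOn ℝ ((4 : ℕ) + 1) U s := by exact_mod_cast hU
  set c0 : ℝ := iteratedDerivWithin 0 U s (-(3 * Δx)) with hc0
  set c1 : ℝ := iteratedDerivWithin 1 U s (-(3 * Δx)) with hc1
  set c2 : ℝ := iteratedDerivWithin 2 U s (-(3 * Δx)) with hc2
  set c3 : ℝ := iteratedDerivWithin 3 U s (-(3 * Δx)) with hc3
  set c4 : ℝ := iteratedDerivWithin 4 U s (-(3 * Δx)) with hc4
  set P : ℝ → ℝ := fun x => taylorWithinEval U 4 s (-(3 * Δx)) x with hPdef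
  have hP : ∀ x : ℝ, P x = c0 + (x + 3 * Δx) * c1 + (x + 3 * Δx) ^ 2 / 2 * c2
      + (x + 3 * Δx) ^ 3 / 6 * c3 + (x + 3 * Δx) ^ 4 / 24 * c4 := by
    intro x
    simp only [hPdef, taylor_within_apply, Finset.sum_range_succ, Finset.sum_range_zero,
      smul_eq_mul, Nat.factorial, ← hc0, ← hc1, ← hc2, ← hc3, ← hc4]
    push_cast
    ring
  -- Taylor remainder bound
  have hrem : ∀ x ∈ s, |U x - P x| ≤ M * (5 * Δx) ^ 5 / 24 := by
    intro x hx
    have h := taylor_mean_remainder_bound (f := U) (n := 4) hab hU' hx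
      (fun y hy => by simpa [Real.norm_eq_abs] using hbound y hy)
    simp only [Real.norm_eq_abs, ← hPdef] at h
    have hx1 : -(3 * Δx) ≤ x := hx.1
    have hx2 : x ≤ 2 * Δx := hx.2
    have h5 : (x - -(3 * Δx)) ^ (4 + 1) ≤ (5 * Δx) ^ 5 := by
      have : x - -(3 * Δx) ≤ 5 * Δx := by linarith
      calc (x - -(3 * Δx)) ^ (4 + 1) ≤ (5 * Δx) ^ (4 + 1) :=
            pow_le_pow_left₀ (by linarith) this _
        _ = (5 * Δx) ^ 5 := by norm_num
    have h24 : ((Nat.factorial 4 : ℕ) : ℝ) = 24 := by norm_num [Nat.factorial]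
    rw [h24] at h
    refine h.trans ?_
    gcongr
  -- antiderivative of P
  set F : ℝ → ℝ := fun x => c0 * (x + 3 * Δx) + c1 * (x + 3 * Δx) ^ 2 / 2
      + c2 * (x + 3 * Δx) ^ 3 / 6 + c3 * (x + 3 * Δx) ^ 4 / 24
      + c4 * (x + 3 * Δx) ^ 5 / 120 with hF
  have hFderiv : ∀ x : ℝ, HasDerivAt F (P x) x := by
    intro x
    have h1 : HasDerivAt (fun y : ℝ => y + 3 * Δx) 1 x := (hasDerivAt_id x).add_const _
    have t1 := h1.const_mul c0
    have t2 := ((h1.pow 2).const_mul c1).div_const 2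
    have t3 := ((h1.pow 3).const_mul c2).div_const 6
    have t4 := ((h1.pow 4).const_mul c3).div_const 24
    have t5 := ((h1.pow 5).const_mul c4).div_const 120
    have := (((t1.add t2).add t3).add t4).add t5
    convert this using 1
    · exact rfl
    · exact rfl
    · funext y; simp only [hF, Pi.add_apply, Pi.pow_apply]
    rw [hP x]
    push_cast
    ring
  have hPcont : Continuous P := by
    have : P = fun x => c0 + (x + 3 * Δx) * c1 + (x + 3 * Δx) ^ 2 / 2 * c2
        + (x + 3 * Δx) ^ 3 / 6 * c3 + (x + 3 * Δx) ^ 4 / 24 * c4 := funext hP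
    rw [this]; fun_prop
  have hPint : ∀ c d : ℝ, ∫ x in c..d, P x = F d - F c := fun c d =>
    intervalIntegral.integral_eq_sub_of_hasDerivAt (fun x _ => hFderiv x)
      (hPcont.intervalIntegrable c d)
  have hUcont : ContinuousOn U s := hU.continuousOn
  -- per-cell error bound
  set K : ℝ := M * (5 * Δx) ^ 5 / 24 with hK
  have hK0 : 0 ≤ K := by positivity
  have hcell : ∀ c d : ℝ, c ∈ s → d ∈ s → d - c = Δx →
      |(1 / Δx) * ((∫ x in c..d, U x) - ∫ x in c..d, P x)| ≤ K := by
    intro c d hc hd hcd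
    have hsub : Set.uIcc c d ⊆ s := Set.uIcc_subset_Icc hc hd
    have hUi : IntervalIntegrable U MeasureTheory.volume c d :=
      (hUcont.mono hsub).intervalIntegrable
    have hineq : |(∫ x in c..d, U x) - ∫ x in c..d, P x| ≤ K * |d - c| := by
      rw [← intervalIntegral.integral_sub hUi (hPcont.intervalIntegrable c d)]
      have := intervalIntegral.norm_integral_le_of_norm_le_const
        (a := c) (b := d) (C := K) (f := fun x => U x - P x)
        (fun x hx => by
          have hxs : x ∈ s := hsub (Set.uIoc_subset_uIcc hx)
          simpa [Real.norm_eq_abs, hK] using hrem x hxs)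
      simpa [Real.norm_eq_abs] using this
    rw [abs_mul, abs_of_nonneg (by positivity : (0:ℝ) ≤ 1 / Δx)]
    rw [hcd, abs_of_pos hΔx] at hineq
    calc (1 / Δx) * |(∫ x in c..d, U x) - ∫ x in c..d, P x|
        ≤ (1 / Δx) * (K * Δx) := by
          apply mul_le_mul_of_nonneg_left hineq (by positivity)
      _ = K := by field_simp
  -- memberships
  have m0 : -3 * Δx ∈ s := by constructor <;> nlinarith
  have m1 : -2 * Δx ∈ s := by constructor <;> nlinarith
  have m2 : -1 * Δx ∈ s := by constructor <;> nlinarith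
  have m3 : (0 : ℝ) * Δx ∈ s := by constructor <;> nlinarith
  have m4 : (1 : ℝ) * Δx ∈ s := by constructor <;> nlinarith
  have m5 : (2 : ℝ) * Δx ∈ s := by constructor <;> nlinarith
  have m6 : (0 : ℝ) ∈ s := by constructor <;> nlinarith
  have h1 := hcell (-3 * Δx) (-2 * Δx) m0 m1 (by ring)
  have h2 := hcell (-2 * Δx) (-1 * Δx) m1 m2 (by ring)
  have h3 := hcell (-1 * Δx) (0 * Δx) m2 m3 (by ring)
  have h4 := hcell (0 * Δx) (1 * Δx) m3 m4 (by ring)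
  have h5 := hcell (1 * Δx) (2 * Δx) m4 m5 (by ring)
  have h6 : |P 0 - U 0| ≤ K := by
    rw [abs_sub_comm]; simpa [hK] using hrem 0 m6
  -- exactness of the formula for the Taylor polynomial
  have hexact : (1 / 30) * ((1 / Δx) * (F (-2 * Δx) - F (-3 * Δx)))
      - (13 / 60) * ((1 / Δx) * (F (-1 * Δx) - F (-2 * Δx)))
      + (47 / 60) * ((1 / Δx) * (F (0 * Δx) - F (-1 * Δx)))
      + (9 / 20) * ((1 / Δx) * (F (1 * Δx) - F (0 * Δx)))
      - (1 / 20) * ((1 / Δx) * (F (2 * Δx) - F (1 * Δx))) = P 0 := by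
    rw [hP 0]
    simp only [hF]
    field_simp
    ring
  -- split the error
  have key : (1 / 30) * ((1 / Δx) * ∫ x in (-3 * Δx)..(-2 * Δx), U x)
        - (13 / 60) * ((1 / Δx) * ∫ x in (-2 * Δx)..(-1 * Δx), U x)
        + (47 / 60) * ((1 / Δx) * ∫ x in (-1 * Δx)..(0 * Δx), U x)
        + (9 / 20) * ((1 / Δx) * ∫ x in (0 * Δx)..(1 * Δx), U x)
        - (1 / 20) * ((1 / Δx) * ∫ x in (1 * Δx)..(2 * Δx), U x)
        - U 0
      = (1 / 30) * ((1 / Δx) * ((∫ x in (-3 * Δx)..(-2 * Δx), U x)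
            - ∫ x in (-3 * Δx)..(-2 * Δx), P x))
        - (13 / 60) * ((1 / Δx) * ((∫ x in (-2 * Δx)..(-1 * Δx), U x)
            - ∫ x in (-2 * Δx)..(-1 * Δx), P x))
        + (47 / 60) * ((1 / Δx) * ((∫ x in (-1 * Δx)..(0 * Δx), U x)
            - ∫ x in (-1 * Δx)..(0 * Δx), P x))
        + (9 / 20) * ((1 / Δx) * ((∫ x in (0 * Δx)..(1 * Δx), U x)
            - ∫ x in (0 * Δx)..(1 * Δx), P x))
        - (1 / 20) * ((1 / Δx) * ((∫ x in (1 * Δx)..(2 * Δx), U x)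
            - ∫ x in (1 * Δx)..(2 * Δx), P x))
        + (P 0 - U 0) := by
    rw [hPint, hPint, hPint, hPint, hPint]
    linear_combination hexact
  rw [key]
  obtain ⟨l1, r1⟩ := abs_le.mp h1
  obtain ⟨l2, r2⟩ := abs_le.mp h2
  obtain ⟨l3, r3⟩ := abs_le.mp h3
  obtain ⟨l4, r4⟩ := abs_le.mp h4
  obtain ⟨l5, r5⟩ := abs_le.mp h5
  obtain ⟨l6, r6⟩ := abs_le.mp h6
  have hKval : K = 3125 * M * Δx ^ 5 / 24 := by rw [hK]; ring
  rw [abs_le]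
  constructor <;> nlinarith [hK0, hKval]
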